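/- Let e be a finite set with positive weights γ and b > 0. Consider the directed graph on vertex set e ∪ {e', e''} with, for each v ∈ e, a directed edge of weight γ(v) from v to e' and a directed edge of weight γ(v) from e'' to v, plus a directed edge of weight b from e' to e''. Then for every S ⊆ e, the minimum over T with T ∩ e = S of the directed cut weight (sum of weights of edges from T to its complement) equals min{γ(S), γ(e \ S), b}. -/

import Mathlib

lemma cost_eq {V : Type*} [DecidableEq V] (e : Finset V) (γ : V → ℝ) (b : ℝ)
    (p q : V) (S T : Finset V) (hTS : T ∩ e = S) :
    (∑ v ∈ e, ((if v ∈ T ∧ p ∉ T then γ v else 0) +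
        (if q ∈ T ∧ v ∉ T then γ v else 0))) +
      (if p ∈ T ∧ q ∉ T then b else 0) =
    (if p ∈ T then 0 else ∑ v ∈ S, γ v) +
      (if q ∈ T then ∑ v ∈ e \ S, γ v else 0) +
      (if p ∈ T ∧ q ∉ T then b else 0) := by
  rw [Finset.sum_add_distrib]
  congr 1
  congr 1
  · by_cases hpT : p ∈ T
    · simp [hpT]
    · simp only [hpT, not_false_iff, and_true, if_neg hpT]
      rw [Finset.sum_ite_mem, Finset.inter_comm, hTS]
      simp
  · by_cases hqT : q ∈ T
    · simp only [hqT, true_and, if_pos]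
      rw [← Finset.sum_filter]
      congr 1
      ext v
      simp only [Finset.mem_filter, Finset.mem_sdiff, ← hTS, Finset.mem_inter]
      tauto
    · simp [hqT]

theorem stmt7 {V : Type*} [DecidableEq V] (e : Finset V) (γ : V → ℝ)
    (hγ : ∀ v ∈ e, 0 < γ v) (b : ℝ) (hb : 0 < b)
    (p q : V) (hp : p ∉ e) (hq : q ∉ e) (hpq : p ≠ q) :
    ∀ S ⊆ e,
      IsLeast
        {x : ℝ | ∃ T : Finset V, T ⊆ insert p (insert q e) ∧ T ∩ e = S ∧
          x = (∑ v ∈ e, ((if v ∈ T ∧ p ∉ T then γ v else 0) +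
                (if q ∈ T ∧ v ∉ T then γ v else 0))) +
              (if p ∈ T ∧ q ∉ T then b else 0)}
        (min (min (∑ v ∈ S, γ v) (∑ v ∈ e \ S, γ v)) b) := by
  intro S hS
  have hSnn : 0 ≤ ∑ v ∈ S, γ v :=
    Finset.sum_nonneg fun v hv => le_of_lt (hγ v (hS hv))
  have hScnn : 0 ≤ ∑ v ∈ e \ S, γ v :=
    Finset.sum_nonneg fun v hv => le_of_lt (hγ v (Finset.mem_sdiff.mp hv).1)
  have hpS : p ∉ S := fun h => hp (hS h)
  have hqS : q ∉ S := fun h => hq (hS h)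
  constructor
  · -- membership: pick the best of three T's
    rcases le_total (min (∑ v ∈ S, γ v) (∑ v ∈ e \ S, γ v)) b with h | h
    · rcases le_total (∑ v ∈ S, γ v) (∑ v ∈ e \ S, γ v) with h2 | h2
      · -- T = S
        refine ⟨S, ?_, Finset.inter_eq_left.mpr hS, ?_⟩
        · exact hS.trans ((Finset.subset_insert q e).trans (Finset.subset_insert p _))
        · rw [cost_eq e γ b p q S S (Finset.inter_eq_left.mpr hS),
            if_neg hpS, if_neg hqS, if_neg (fun h' => hpS h'.1),
            min_eq_left h, min_eq_left h2]
          ring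
      · -- T = insert p (insert q S)
        have hT : insert p (insert q S) ∩ e = S := by
          ext v
          simp only [Finset.mem_inter, Finset.mem_insert]
          constructor
          · rintro ⟨(rfl | rfl | hv), hve⟩
            · exact absurd hve hp
            · exact absurd hve hq
            · exact hv
          · intro hv; exact ⟨Or.inr (Or.inr hv), hS hv⟩
        have hqmem : q ∈ insert p (insert q S) :=
          Finset.mem_insert_of_mem (Finset.mem_insert_self q S)
        refine ⟨insert p (insert q S), ?_, hT, ?_⟩
        · intro v hv
          simp only [Finset.mem_insert] at hv ⊢
          rcases hv with rfl | rfl | hv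
          · exact Or.inl rfl
          · exact Or.inr (Or.inl rfl)
          · exact Or.inr (Or.inr (hS hv))
        · rw [cost_eq e γ b p q S _ hT,
            if_pos (Finset.mem_insert_self p _), if_pos hqmem,
            if_neg (fun h' => h'.2 hqmem), min_eq_left h, min_eq_right h2]
          ring
    · -- T = insert p S
      have hT : insert p S ∩ e = S := by
        ext v
        simp only [Finset.mem_inter, Finset.mem_insert]
        constructor
        · rintro ⟨(rfl | hv), hve⟩
          · exact absurd hve hp
          · exact hv
        · intro hv; exact ⟨Or.inr hv, hS hv⟩
      have hqT : q ∉ insert p S := by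
        simp only [Finset.mem_insert]
        rintro (rfl | h'); exact hpq rfl; exact hqS h'
      refine ⟨insert p S, ?_, hT, ?_⟩
      · intro v hv
        simp only [Finset.mem_insert] at hv ⊢
        rcases hv with rfl | hv
        · exact Or.inl rfl
        · exact Or.inr (Or.inr (hS hv))
      · rw [cost_eq e γ b p q S _ hT,
          if_pos (Finset.mem_insert_self p S), if_neg hqT,
          if_pos ⟨Finset.mem_insert_self p S, hqT⟩, min_eq_right h]
        ring
  · -- lower bound
    rintro x ⟨T, hTsub, hTS, rfl⟩
    rw [cost_eq e γ b p q S T hTS]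
    by_cases hpT : p ∈ T <;> by_cases hqT : q ∈ T
    · rw [if_pos hpT, if_pos hqT, if_neg (fun h' => h'.2 hqT)]
      have : min (min (∑ v ∈ S, γ v) (∑ v ∈ e \ S, γ v)) b ≤ ∑ v ∈ e \ S, γ v :=
        le_trans (min_le_left _ _) (min_le_right _ _)
      linarith
    · rw [if_pos hpT, if_neg hqT, if_pos ⟨hpT, hqT⟩]
      have : min (min (∑ v ∈ S, γ v) (∑ v ∈ e \ S, γ v)) b ≤ b := min_le_right _ _
      linarith
    · rw [if_neg hpT, if_pos hqT, if_neg (fun h' => hpT h'.1)]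
      have : min (min (∑ v ∈ S, γ v) (∑ v ∈ e \ S, γ v)) b ≤ ∑ v ∈ S, γ v :=
        le_trans (min_le_left _ _) (min_le_left _ _)
      linarith
    · rw [if_neg hpT, if_neg hqT, if_neg (fun h' => hpT h'.1)]
      have : min (min (∑ v ∈ S, γ v) (∑ v ∈ e \ S, γ v)) b ≤ ∑ v ∈ S, γ v :=
        le_trans (min_le_left _ _) (min_le_left _ _)
      linarith
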